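/- Let u be an idempotent min-unbounded ultrafilter on FIN and let A ∈ u. Then there exists an infinite block sequence ⟨xₙ | n < ω⟩ (with max(xₙ) < min(x_{n+1}) for all n) such that FU({xₙ | n < ω}) ⊆ A. -/

import Mathlib

open Set

def FIN : Set (Finset ℕ) := {s | s.Nonempty}

/-- FU(X): all unions of nonempty finite subfamilies of X. -/
def FU (X : Set (Finset ℕ)) : Set (Finset ℕ) :=
  {s | ∃ F : Finset (Finset ℕ), F.Nonempty ∧ ↑F ⊆ X ∧ s = F.sup id}

/-- min of a (nonempty) finite set of naturals. -/
noncomputable def mn (s : Finset ℕ) : ℕ := sInf ↑s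
/-- max of a finite set of naturals. -/
def mx (s : Finset ℕ) : ℕ := s.sup id

def MinUnbSet (A : Set (Finset ℕ)) : Prop := ∀ n : ℕ, ∃ x ∈ A, n < mn x

/-- −x + A = { y ∈ FIN | max x < min y ∧ x ∪ y ∈ A }. -/
def negAdd (x : Finset ℕ) (A : Set (Finset ℕ)) : Set (Finset ℕ) :=
  {y | y ∈ FIN ∧ mx x < mn y ∧ x ∪ y ∈ A}

/-- A ∈ u + v iff { x | −x + A ∈ v } ∈ u. -/
def sumMem (u v : Ultrafilter (Finset ℕ)) (A : Set (Finset ℕ)) : Prop :=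
  {x | negAdd x A ∈ v} ∈ u

/-- a min-unbounded ultrafilter on FIN. -/
def MinUnbUlt (u : Ultrafilter (Finset ℕ)) : Prop :=
  FIN ∈ u ∧ ∀ A ∈ u, MinUnbSet A

/-- an infinite pairwise disjoint family of nonempty finite sets. -/
def PDisjFam (X : Set (Finset ℕ)) : Prop :=
  X ⊆ FIN ∧ X.Infinite ∧ X.PairwiseDisjoint id

/-- a block family: any two distinct members are separated. -/
def IsBlockFam (X : Set (Finset ℕ)) : Prop :=
  X ⊆ FIN ∧ ∀ x ∈ X, ∀ y ∈ X, x ≠ y → mx x < mn y ∨ mx y < mn x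

/-- a block sequence indexed by ℕ. -/
def IsBlockSeq (x : ℕ → Finset ℕ) : Prop :=
  (∀ n, (x n).Nonempty) ∧ ∀ n, mx (x n) < mn (x (n + 1))

/-- A* = { x ∈ A | −x + A ∈ u }. -/
def ustar (u : Ultrafilter (Finset ℕ)) (A : Set (Finset ℕ)) : Set (Finset ℕ) :=
  {x | x ∈ A ∧ negAdd x A ∈ u}

/-- a union ultrafilter on FIN. -/
def UnionUlt (u : Ultrafilter (Finset ℕ)) : Prop :=
  FIN ∈ u ∧ ∀ A ∈ u, ∃ X, PDisjFam X ∧ FU X ∈ u ∧ FU X ⊆ A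

/-- almost condensation: X ≤ Y iff X \ F ⊆ FU Y for some finite F. -/
def ACond (X Y : Set (Finset ℕ)) : Prop :=
  ∃ F : Set (Finset ℕ), F.Finite ∧ X \ F ⊆ FU Y



lemma mn_le_mx {s : Finset ℕ} (hs : s.Nonempty) : mn s ≤ mx s := by
  obtain ⟨a, ha⟩ := hs
  exact le_trans (Nat.sInf_le (by simpa using ha)) (Finset.le_sup (f := id) ha)

lemma mn_mem {s : Finset ℕ} (hs : s.Nonempty) : mn s ∈ s := by
  have := Nat.sInf_mem (s := (↑s : Set ℕ)) (by simpa using hs)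
  simpa [mn] using this

lemma mn_le {s : Finset ℕ} {a : ℕ} (ha : a ∈ s) : mn s ≤ a :=
  Nat.sInf_le (by simpa using ha)

lemma mx_union (s t : Finset ℕ) : mx (s ∪ t) = max (mx s) (mx t) :=
  Finset.sup_union

lemma negAdd_negAdd {x z : Finset ℕ} (hx : x.Nonempty) (hz : z.Nonempty)
    (hxz : mx x < mn z) (A : Set (Finset ℕ)) :
    negAdd z (negAdd x A) = negAdd (x ∪ z) A := by
  have hmx : mx (x ∪ z) = mx z := by
    rw [mx_union]
    exact max_eq_right (le_of_lt (lt_of_lt_of_le hxz (mn_le_mx hz)))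
  ext w
  constructor
  · rintro ⟨hw, hzw, _, _, hmem⟩
    refine ⟨hw, by rw [hmx]; exact hzw, ?_⟩
    rwa [Finset.union_assoc]
  · rintro ⟨hw, hzw, hmem⟩
    rw [hmx] at hzw
    have hwne : w.Nonempty := hw
    have hzwne : (z ∪ w).Nonempty := hz.mono Finset.subset_union_left
    have hminzw : mx x < mn (z ∪ w) := by
      have hm := mn_mem hzwne
      rcases Finset.mem_union.1 hm with h | h
      · exact lt_of_lt_of_le hxz (mn_le h)
      · exact lt_of_lt_of_le hxz (le_trans (mn_le_mx hz) (le_of_lt (lt_of_lt_of_le hzw (mn_le h))))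
    exact ⟨hw, hzw, hzwne, hminzw, by rwa [← Finset.union_assoc]⟩

lemma ustar_mem (u : Ultrafilter (Finset ℕ))
    (hidem : ∀ A : Set (Finset ℕ), A ∈ u ↔ sumMem u u A)
    {A : Set (Finset ℕ)} (hA : A ∈ u) : ustar u A ∈ u := by
  have h := (hidem A).1 hA
  exact Filter.inter_mem hA h

lemma negAdd_ustar_mem (u : Ultrafilter (Finset ℕ))
    (hidem : ∀ A : Set (Finset ℕ), A ∈ u ↔ sumMem u u A)
    {A : Set (Finset ℕ)} {x : Finset ℕ} (hx : x.Nonempty)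
    (hxA : negAdd x A ∈ u) : negAdd x (ustar u A) ∈ u := by
  refine Filter.mem_of_superset (ustar_mem u hidem hxA) ?_
  rintro z ⟨⟨hzF, hxz, hmem⟩, hz2⟩
  refine ⟨hzF, hxz, hmem, ?_⟩
  rwa [← negAdd_negAdd hx hzF hxz]

section Construction

variable (u : Ultrafilter (Finset ℕ)) (A : Set (Finset ℕ))

def combos (l : List (Finset ℕ)) : Finset (Finset (Finset ℕ)) :=
  l.toFinset.powerset.filter (·.Nonempty)

def Sset (l : List (Finset ℕ)) : Set (Finset ℕ) :=
  FIN ∩ ustar u A ∩ ⋂ F ∈ combos l, negAdd (F.sup id) (ustar u A)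

open Classical in
noncomputable def step (l : List (Finset ℕ)) : Finset ℕ :=
  if h : (Sset u A l).Nonempty then h.choose else ∅

noncomputable def seqL : ℕ → List (Finset ℕ)
  | 0 => []
  | n + 1 => seqL n ++ [step u A (seqL n)]

noncomputable def seqx (n : ℕ) : Finset ℕ := step u A (seqL u A n)

def GInv (l : List (Finset ℕ)) : Prop :=
  ∀ F : Finset (Finset ℕ), F.Nonempty → F ⊆ l.toFinset →
    (F.sup id).Nonempty ∧ F.sup id ∈ ustar u A

variable {u A}
variable (hFIN : FIN ∈ u) (hidem : ∀ B : Set (Finset ℕ), B ∈ u ↔ sumMem u u B)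
  (hA : A ∈ u)

include hFIN hidem hA in
lemma Sset_mem {l : List (Finset ℕ)} (hl : GInv u A l) : Sset u A l ∈ u := by
  refine Filter.inter_mem (Filter.inter_mem hFIN (ustar_mem u hidem hA)) ?_
  rw [Filter.biInter_finset_mem]
  intro F hF
  obtain ⟨hF1, hF2⟩ := Finset.mem_filter.1 hF
  obtain ⟨hne, hstar⟩ := hl F hF2 (Finset.mem_powerset.1 hF1)
  exact negAdd_ustar_mem u hidem hne hstar.2

include hFIN hidem hA in
lemma step_mem {l : List (Finset ℕ)} (hl : GInv u A l) : step u A l ∈ Sset u A l := by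
  have hne : (Sset u A l).Nonempty := Ultrafilter.nonempty_of_mem (Sset_mem hFIN hidem hA hl)
  rw [step, dif_pos hne]
  exact hne.choose_spec

include hFIN hidem hA in
lemma Inv_extend {l : List (Finset ℕ)} (hl : GInv u A l) :
    GInv u A (l ++ [step u A l]) := by
  set a := step u A l with ha
  have haS := step_mem hFIN hidem hA hl
  obtain ⟨⟨haF, hast⟩, haI⟩ := haS
  intro F hFne hFsub
  have hsub' : F ⊆ insert a l.toFinset := by
    intro f hf
    have := hFsub hf
    simp only [List.toFinset_append, List.toFinset_cons, List.toFinset_nil] at this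
    simpa [Finset.mem_union, Finset.mem_insert, or_comm] using this
  by_cases haF' : a ∈ F
  · have hF' : F = insert a (F.erase a) := (Finset.insert_erase haF').symm
    have herase : F.erase a ⊆ l.toFinset := by
      intro f hf
      rcases Finset.mem_insert.1 (hsub' (Finset.mem_of_mem_erase hf)) with h | h
      · exact absurd h (Finset.ne_of_mem_erase hf)
      · exact h
    rw [hF', Finset.sup_insert]
    by_cases hE : (F.erase a).Nonempty
    · obtain ⟨hyne, hystar⟩ := hl (F.erase a) hE herase
      set y := (F.erase a).sup id with hy
      have hcy : (F.erase a) ∈ combos l :=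
        Finset.mem_filter.2 ⟨Finset.mem_powerset.2 herase, hE⟩
      have haIy : a ∈ negAdd y (ustar u A) := by
        have := Set.mem_iInter₂.1 haI (F.erase a) hcy
        exact this
      obtain ⟨_, hlt, hmem⟩ := haIy
      constructor
      · exact hyne.mono (by simp [Finset.subset_union_right])
      · have : (id a ⊔ y) = y ∪ a := by simp [Finset.union_comm]
        rw [this]
        exact hmem
    · have : F.erase a = ∅ := Finset.not_nonempty_iff_eq_empty.1 hE
      rw [this]
      simp only [Finset.sup_empty, id_eq]
      constructor
      · simpa [FIN, ← ha] using haF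
      · simpa using hast
  · have : F ⊆ l.toFinset := by
      intro f hf
      rcases Finset.mem_insert.1 (hsub' hf) with h | h
      · exact absurd (h ▸ hf) haF'
      · exact h
    exact hl F hFne this

include hFIN hidem hA in
lemma GInv_seqL : ∀ n, GInv u A (seqL u A n) := by
  intro n
  induction n with
  | zero =>
    intro F hFne hFsub
    simp only [seqL, List.toFinset_nil, Finset.subset_empty] at hFsub
    exact absurd hFsub (Finset.nonempty_iff_ne_empty.1 hFne)
  | succ n ih =>
    exact Inv_extend hFIN hidem hA ih

lemma seqx_mem_seqL {i n : ℕ} (h : i < n) : seqx u A i ∈ seqL u A n := by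
  induction n with
  | zero => omega
  | succ n ih =>
    rcases Nat.lt_succ_iff_lt_or_eq.1 h with h | h
    · simp [seqL, ih h]
    · subst h
      simp [seqL, seqx]

end Construction

theorem stmt9 (u : Ultrafilter (Finset ℕ)) (hu : MinUnbUlt u)
    (hidem : ∀ A : Set (Finset ℕ), A ∈ u ↔ sumMem u u A)
    (A : Set (Finset ℕ)) (hA : A ∈ u) :
    ∃ x : ℕ → Finset ℕ, (∀ n, (x n).Nonempty) ∧
      (∀ n, mx (x n) < mn (x (n + 1))) ∧ FU (Set.range x) ⊆ A := by
  obtain ⟨hFIN, -⟩ := hu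
  have hstep : ∀ n, seqx u A n ∈ Sset u A (seqL u A n) :=
    fun n => step_mem hFIN hidem hA (GInv_seqL hFIN hidem hA n)
  refine ⟨seqx u A, fun n => (hstep n).1.1, ?_, ?_⟩
  · intro n
    have h2 := (hstep (n + 1)).2
    have hc : ({seqx u A n} : Finset (Finset ℕ)) ∈ combos (seqL u A (n + 1)) := by
      refine Finset.mem_filter.2 ⟨Finset.mem_powerset.2 ?_, Finset.singleton_nonempty _⟩
      simp only [Finset.singleton_subset_iff, List.mem_toFinset]
      exact seqx_mem_seqL (Nat.lt_succ_self n)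
    have h3 := Set.mem_iInter₂.1 h2 _ hc
    rw [Finset.sup_singleton] at h3
    exact h3.2.1
  · rintro s ⟨F, hFne, hFsub, rfl⟩
    classical
    set g : Finset ℕ → ℕ := fun f => if h : ∃ i, seqx u A i = f then h.choose else 0 with hg
    set N := F.sup g + 1 with hN
    have hFsub' : F ⊆ (seqL u A N).toFinset := by
      intro f hf
      have hex : ∃ i, seqx u A i = f := hFsub hf
      have hgf : seqx u A (g f) = f := by
        simp only [hg, dif_pos hex]
        exact hex.choose_spec
      have hlt : g f < N := Nat.lt_succ_of_le (Finset.le_sup hf)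
      rw [List.mem_toFinset, ← hgf]
      exact seqx_mem_seqL hlt
    exact ((GInv_seqL hFIN hidem hA N) F hFne hFsub').2.1
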